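/- For a two-qubit density matrix ρ with ρ̃ = (σ_y⊗σ_y)ρ*(σ_y⊗σ_y), the matrix ρρ̃ has nonnegative real eigenvalues, and consequently each moment m_k = tr[(ρρ̃)^k] is a nonnegative real number. -/

import Mathlib

open ComplexOrder Matrix Kronecker

/-- The Pauli-Y matrix. -/
noncomputable def pauliY : Matrix (Fin 2) (Fin 2) ℂ := !![0, -Complex.I; Complex.I, 0]

/-- `ρ̃ = (σ_y⊗σ_y) ρ* (σ_y⊗σ_y)`. -/
noncomputable def rhoTilde (ρ : Matrix (Fin 2 × Fin 2) (Fin 2 × Fin 2) ℂ) :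
    Matrix (Fin 2 × Fin 2) (Fin 2 × Fin 2) ℂ :=
  (pauliY ⊗ₖ pauliY) * ρ.map (starRingEnd ℂ) * (pauliY ⊗ₖ pauliY)

lemma pauliYY_herm : (pauliY ⊗ₖ pauliY)ᴴ = pauliY ⊗ₖ pauliY := by
  ext ⟨i, j⟩ ⟨k, l⟩
  simp only [conjTranspose_apply, kroneckerMap_apply, pauliY, star_mul']
  fin_cases i <;> fin_cases j <;> fin_cases k <;> fin_cases l <;> simp

lemma rhoTilde_posSemidef {ρ : Matrix (Fin 2 × Fin 2) (Fin 2 × Fin 2) ℂ}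
    (hρ : ρ.PosSemidef) : (rhoTilde ρ).PosSemidef := by
  have hmap : ρ.map (starRingEnd ℂ) = ρᵀ := by
    have h1 := hρ.1
    rw [Matrix.IsHermitian] at h1
    calc ρ.map (starRingEnd ℂ) = (ρᴴ)ᵀ := by
          ext i j; simp [conjTranspose_apply, transpose_apply]
      _ = ρᵀ := by rw [h1]
  have h := (hρ.transpose).mul_mul_conjTranspose_same (pauliY ⊗ₖ pauliY)
  rw [pauliYY_herm] at h
  rw [rhoTilde, hmap]
  exact h

lemma trace_pow_mul_comm {n : Type*} [Fintype n] [DecidableEq n]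
    (a b : Matrix n n ℂ) (k : ℕ) (hk : 1 ≤ k) :
    ((a * b) ^ k).trace = ((b * a) ^ k).trace := by
  obtain ⟨m, rfl⟩ := Nat.exists_eq_add_of_le hk
  have hsc : SemiconjBy a ((b * a) ^ m) ((a * b) ^ m) := by
    have h : SemiconjBy a (b * a) (a * b) := by simp [SemiconjBy, mul_assoc]
    exact h.pow_right m
  calc ((a * b) ^ (1 + m)).trace = (a * (b * (a * b) ^ m)).trace := by
        rw [pow_add, pow_one, mul_assoc]
    _ = ((b * (a * b) ^ m) * a).trace := Matrix.trace_mul_comm _ _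
    _ = (b * ((a * b) ^ m * a)).trace := by rw [mul_assoc]
    _ = (b * (a * (b * a) ^ m)).trace := by rw [← hsc.eq]
    _ = ((b * a) ^ (1 + m)).trace := by rw [pow_add, pow_one, mul_assoc]

lemma psd_trace_nonneg {n : Type*} [Fintype n] [DecidableEq n] {M : Matrix n n ℂ}
    (hM : M.PosSemidef) : ∃ r : ℝ, 0 ≤ r ∧ M.trace = (r : ℂ) := by
  have h : (0 : ℂ) ≤ M.trace := by
    exact hM.trace_nonneg
  rw [Complex.nonneg_iff] at h
  exact ⟨M.trace.re, h.1, by rw [Complex.ext_iff]; simp [← h.2]⟩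

/-- `ρρ̃` has nonnegative real eigenvalues, and each moment `m_k = tr[(ρρ̃)^k]`
is a nonnegative real number. -/
theorem stmt8 (ρ : Matrix (Fin 2 × Fin 2) (Fin 2 × Fin 2) ℂ)
    (hρ : ρ.PosSemidef) (htr : ρ.trace = 1) :
    (∀ μ ∈ spectrum ℂ (ρ * rhoTilde ρ), ∃ r : ℝ, 0 ≤ r ∧ μ = (r : ℂ)) ∧
    (∀ k : ℕ, 1 ≤ k → ∃ r : ℝ, 0 ≤ r ∧ ((ρ * rhoTilde ρ) ^ k).trace = (r : ℂ)) := by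
  open scoped MatrixOrder in
  set S := CFC.sqrt ρ with hS
  have hSposd : S.PosSemidef := open scoped MatrixOrder in
    Matrix.nonneg_iff_posSemidef.mp (CFC.sqrt_nonneg ρ)
  have hSH : Sᴴ = S := hSposd.1
  have hSS : S * S = ρ := open scoped MatrixOrder in
    CFC.sqrt_mul_sqrt_self ρ (Matrix.nonneg_iff_posSemidef.mpr hρ)
  have hT := rhoTilde_posSemidef hρ
  have hN : (S * rhoTilde ρ * S).PosSemidef := by
    have h := hT.mul_mul_conjTranspose_same S
    rwa [hSH] at h
  have hfactor : ρ * rhoTilde ρ = S * (S * rhoTilde ρ) := by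
    rw [← mul_assoc, hSS]
  constructor
  · intro μ hμ
    rcases eq_or_ne μ 0 with rfl | hμ0
    · exact ⟨0, le_refl 0, by simp⟩
    · have hmem : μ ∈ spectrum ℂ (S * (S * rhoTilde ρ)) \ {0} := by
        rw [← hfactor]; exact ⟨hμ, hμ0⟩
      rw [spectrum.nonzero_mul_comm] at hmem
      have hμN : μ ∈ spectrum ℂ (S * rhoTilde ρ * S) := hmem.1
      rw [hN.1.spectrum_eq_image_range] at hμN
      obtain ⟨_, ⟨i, rfl⟩, hi⟩ := hμN
      exact ⟨hN.1.eigenvalues i, hN.eigenvalues_nonneg i, hi.symm⟩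
  · intro k hk
    have htrace : ((ρ * rhoTilde ρ) ^ k).trace = ((S * rhoTilde ρ * S) ^ k).trace := by
      rw [hfactor, trace_pow_mul_comm _ _ k hk]
    rw [htrace]
    exact psd_trace_nonneg (hN.pow k)
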